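/- Let 𝕜 be a nontrivially normed field, let A and G be normed 𝕜-vector spaces, let g : A →L[𝕜] G be a continuous linear map, and let i : A → Completion A be the canonical map into the completion. Let S be the closure in G × Completion A of the set { (-g a, i a) : a ∈ A } (a closed subspace). Then for m ∈ G one has (m, 0) ∈ S if and only if m = 0; consequently the map j : G → (G × Completion A) ⧸ S sending m to the class of (m, 0) is injective. (This is the key step showing that the completion morphism i : A → Completion A is a universal monomorphism in the category of normed spaces.) -/

import Mathlib

open UniformSpace

/-- Let `g : A →L[𝕜] G` be a continuous linear map of normed spaces and
`i : A → Completion A` the canonical map into the completion. Let `S` be the closure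
in `G × Completion A` of `{ (-g a, i a) | a ∈ A }`. Then `(m, 0) ∈ S ↔ m = 0`, and
consequently the pushout map `j : G → (G × Completion A) ⧸ S`, `m ↦ [(m, 0)]`, is
injective. -/
theorem completion_universalMono {𝕜 : Type*} [NontriviallyNormedField 𝕜]
    {A G : Type*} [NormedAddCommGroup A] [NormedSpace 𝕜 A]
    [NormedAddCommGroup G] [NormedSpace 𝕜 G]
    (g : A →L[𝕜] G) :
    (∀ m : G,
      (m, (0 : Completion A)) ∈
        Submodule.topologicalClosure
          (LinearMap.range (LinearMap.prod (-g.toLinearMap)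
            (Completion.toComplL (𝕜 := 𝕜) (E := A)).toLinearMap)) ↔ m = 0) ∧
    Function.Injective (fun m : G =>
      Submodule.Quotient.mk
        (p := Submodule.topologicalClosure
          (LinearMap.range (LinearMap.prod (-g.toLinearMap)
            (Completion.toComplL (𝕜 := 𝕜) (E := A)).toLinearMap)))
        (m, (0 : Completion A))) := by
  set S := Submodule.topologicalClosure
      (LinearMap.range (LinearMap.prod (-g.toLinearMap)
        (Completion.toComplL (𝕜 := 𝕜) (E := A)).toLinearMap)) with hS
  -- the continuous test map
  set F : G × Completion A → Completion G :=
    fun p => Completion.map g p.2 + (p.1 : Completion G) with hF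
  have hgu : UniformContinuous g := g.uniformContinuous
  have hFc : Continuous F := by
    apply Continuous.add
    · exact (Completion.continuous_map).comp continuous_snd
    · exact (Completion.continuous_coe G).comp continuous_fst
  have key : ∀ m : G, (m, (0 : Completion A)) ∈ S ↔ m = 0 := by
    intro m
    constructor
    · intro hm
      have hsub : (S : Set (G × Completion A)) ⊆ F ⁻¹' {0} := by
        apply closure_minimal
        · rintro ⟨x, y⟩ ⟨a, ha⟩
          simp only [LinearMap.prod_apply, Function.prod, Prod.mk.injEq] at ha
          obtain ⟨h1, h2⟩ := ha
          have hy : y = (a : Completion A) := by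
            rw [← h2]; rfl
          have hx : x = -(g a) := by
            rw [← h1]; rfl
          simp only [Set.mem_preimage, Set.mem_singleton_iff, hF, hy, hx,
            Completion.map_coe hgu]
          push_cast
          exact add_neg_cancel _
        · exact IsClosed.preimage hFc isClosed_singleton
      have := hsub hm
      simp only [Set.mem_preimage, Set.mem_singleton_iff, hF] at this
      have h0 : Completion.map g (0 : Completion A) = 0 := by
        have : ((0 : A) : Completion A) = 0 := by push_cast; rfl
        rw [← this, Completion.map_coe hgu, map_zero, Completion.coe_zero]
      rw [h0, zero_add] at this
      exact (Completion.coe_injective G) (by rw [this]; push_cast; rfl)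
    · rintro rfl
      exact S.zero_mem
  refine ⟨key, ?_⟩
  intro m m' h
  simp only at h
  rw [Submodule.Quotient.eq] at h
  have : (m - m', (0 : Completion A)) ∈ S := by
    simpa using h
  have := (key (m - m')).mp this
  exact sub_eq_zero.mp this
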